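/- Let p, q be probability mass functions on a finite set A with p(a), q(a) > 0 for all a, and suppose |log(q(a)/p(a))| ≤ L for all a. Then Σ_a p(a) (log q(a) − log p(a))² ≤ 2 e^{4L} · KL(p‖q). -/

import Mathlib

open Real

lemma expA (u : ℝ) (hu : 0 ≤ u) : u ^ 2 / 2 ≤ exp u - 1 - u := by
  have hmono : MonotoneOn (fun x : ℝ => exp x - 1 - x - x ^ 2 / 2) (Set.Ici 0) := by
    apply monotoneOn_of_deriv_nonneg (convex_Ici 0)
    · fun_prop
    · fun_prop
    · intro y hy
      simp only [interior_Ici, Set.mem_Ioi] at hy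
      have h1 : HasDerivAt (fun x : ℝ => exp x - 1 - x - x ^ 2 / 2)
          (exp y - 1 - y) y := by
        have h := ((((Real.hasDerivAt_exp y).sub_const 1).sub (hasDerivAt_id y)).sub
          ((hasDerivAt_pow 2 y).div_const 2))
        exact h.congr_deriv (by push_cast; ring)
      rw [h1.deriv]
      nlinarith [add_one_le_exp y]
  have := hmono (Set.self_mem_Ici) (by simpa using hu) hu
  simp at this
  linarith

lemma expB (v : ℝ) (hv : 0 ≤ v) : v ^ 2 / 2 ≤ 1 - exp v + v * exp v := by
  have hmono : MonotoneOn (fun x : ℝ => 1 - exp x + x * exp x - x ^ 2 / 2) (Set.Ici 0) := by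
    apply monotoneOn_of_deriv_nonneg (convex_Ici 0)
    · fun_prop
    · fun_prop
    · intro y hy
      simp only [interior_Ici, Set.mem_Ioi] at hy
      have h1 : HasDerivAt (fun x : ℝ => 1 - exp x + x * exp x - x ^ 2 / 2)
          (y * exp y - y) y := by
        have h := (((hasDerivAt_const y (1:ℝ)).sub (Real.hasDerivAt_exp y)).add
          ((hasDerivAt_id y).mul (Real.hasDerivAt_exp y))).sub
          ((hasDerivAt_pow 2 y).div_const 2)
        simp only [id] at h
        exact h.congr_deriv (by push_cast; ring)
      rw [h1.deriv]
      nlinarith [add_one_le_exp y, hy.le]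
  have := hmono (Set.self_mem_Ici) (by simpa using hv) hv
  simp at this
  linarith

lemma key (L u : ℝ) (hL : 0 ≤ L) (h : |u| ≤ L) :
    u ^ 2 ≤ 2 * exp (4 * L) * (exp u - 1 - u) := by
  have hE : (1:ℝ) ≤ exp (4 * L) := by
    rw [← Real.exp_zero]; exact exp_le_exp.2 (by linarith)
  rcases le_or_gt 0 u with hu | hu
  · have := expA u hu
    nlinarith [sq_nonneg u]
  · have hv : 0 ≤ -u := by linarith
    have hB := expB (-u) hv
    -- e^u - 1 - u ≥ u^2 * e^u / 2 ; e^u ≥ e^{-L}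
    have h1 : u ^ 2 * exp u / 2 ≤ exp u - 1 - u := by
      have h2 : exp (-u) * (exp u - 1 - u) = 1 - exp (-u) + (-u) * exp (-u) := by
        rw [Real.exp_neg]
        have := (Real.exp_pos u).ne'
        field_simp
        ring
      have h3 : (-u) ^ 2 / 2 ≤ exp (-u) * (exp u - 1 - u) := by rw [h2]; exact hB
      have h4 : exp u * ((-u) ^ 2 / 2) ≤ exp u * (exp (-u) * (exp u - 1 - u)) :=
        mul_le_mul_of_nonneg_left h3 (exp_nonneg u)
      have : exp u * exp (-u) = 1 := by rw [← Real.exp_add]; simp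
      calc u ^ 2 * exp u / 2 = exp u * ((-u) ^ 2 / 2) := by ring
        _ ≤ exp u * (exp (-u) * (exp u - 1 - u)) := h4
        _ = (exp u * exp (-u)) * (exp u - 1 - u) := by ring
        _ = exp u - 1 - u := by rw [this]; ring
    have hge : exp (-L) ≤ exp u := exp_le_exp.2 (by cases abs_le.1 h; linarith)
    have hprod : exp (4 * L) * exp (-L) = exp (3 * L) := by rw [← Real.exp_add]; ring_nf
    have hE3 : (1:ℝ) ≤ exp (3 * L) := by rw [← Real.exp_zero]; exact exp_le_exp.2 (by linarith)
    have h5 : u ^ 2 * exp (-L) / 2 ≤ exp u - 1 - u := by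
      have := mul_le_mul_of_nonneg_left hge (by positivity : (0:ℝ) ≤ u ^ 2 / 2)
      nlinarith
    calc u ^ 2 = exp (3 * L) * u ^ 2 / exp (3 * L) := by field_simp
      _ ≤ exp (3 * L) * u ^ 2 := by
          apply div_le_self (by positivity) hE3
      _ = 2 * exp (4 * L) * (u ^ 2 * exp (-L) / 2) := by
          rw [← hprod]; ring
      _ ≤ 2 * exp (4 * L) * (exp u - 1 - u) := by
          apply mul_le_mul_of_nonneg_left h5 (by positivity)

theorem sq_log_ratio_le_kl
    {A : Type*} [Fintype A] [Nonempty A]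
    (L : ℝ) (hL : 0 ≤ L)
    (p q : A → ℝ)
    (hp0 : ∀ a, 0 < p a) (hp1 : ∑ a, p a = 1)
    (hq0 : ∀ a, 0 < q a) (hq1 : ∑ a, q a = 1)
    (hratio : ∀ a, |Real.log (q a / p a)| ≤ L) :
    ∑ a, p a * (Real.log (q a) - Real.log (p a)) ^ 2
      ≤ 2 * Real.exp (4 * L) * ∑ a, p a * Real.log (p a / q a) := by
  have hkey : ∀ a, p a * (Real.log (q a) - Real.log (p a)) ^ 2
      ≤ 2 * Real.exp (4 * L) *
        (q a - p a - p a * (Real.log (q a) - Real.log (p a))) := by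
    intro a
    have hd : Real.log (q a / p a) = Real.log (q a) - Real.log (p a) :=
      Real.log_div (hq0 a).ne' (hp0 a).ne'
    have hexp : Real.exp (Real.log (q a / p a)) = q a / p a :=
      Real.exp_log (div_pos (hq0 a) (hp0 a))
    have h := key L (Real.log (q a / p a)) hL (hratio a)
    rw [hexp, hd] at h
    have h2 := mul_le_mul_of_nonneg_left h (hp0 a).le
    have hpq : p a * (q a / p a) = q a := by field_simp [(hp0 a).ne']
    calc p a * (Real.log (q a) - Real.log (p a)) ^ 2
        ≤ p a * (2 * Real.exp (4 * L) *
            (q a / p a - 1 - (Real.log (q a) - Real.log (p a)))) := h2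
      _ = 2 * Real.exp (4 * L) *
            (p a * (q a / p a) - p a - p a * (Real.log (q a) - Real.log (p a))) := by
          ring
      _ = 2 * Real.exp (4 * L) *
            (q a - p a - p a * (Real.log (q a) - Real.log (p a))) := by rw [hpq]
  calc ∑ a, p a * (Real.log (q a) - Real.log (p a)) ^ 2
      ≤ ∑ a, 2 * Real.exp (4 * L) *
          (q a - p a - p a * (Real.log (q a) - Real.log (p a))) :=
        Finset.sum_le_sum fun a _ => hkey a
    _ = 2 * Real.exp (4 * L) *
          ∑ a, (q a - p a - p a * (Real.log (q a) - Real.log (p a))) := by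
        rw [Finset.mul_sum]
    _ = 2 * Real.exp (4 * L) * ∑ a, p a * Real.log (p a / q a) := by
        congr 1
        have h1 : ∀ a : A, q a - p a - p a * (Real.log (q a) - Real.log (p a))
            = (q a - p a) + (p a * Real.log (p a) - p a * Real.log (q a)) :=
          fun a => by ring
        have h2 : ∀ a : A, p a * Real.log (p a / q a)
            = p a * Real.log (p a) - p a * Real.log (q a) := fun a => by
          rw [Real.log_div (hp0 a).ne' (hq0 a).ne']; ring
        rw [Finset.sum_congr rfl fun a _ => h1 a,
          Finset.sum_congr rfl fun a _ => h2 a,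
          Finset.sum_add_distrib, Finset.sum_sub_distrib, hp1, hq1]
        ring
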